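/- Let H be a real inner product space of dimension at least 2, and let S = {x ∈ H : ‖x‖ = 1} be its unit sphere equipped with the metric induced from H (the chordal metric d(x,y) = ‖x − y‖). Then S does not have the Hrushovski–Solecki–Vershik property. -/

import Mathlib

/-- A metric space `X` has the *Hrushovski–Solecki–Vershik property* if for every finite
subset `Y` of `X` there exists a finite subset `Z` with `Y ⊆ Z ⊆ X` such that every
partial isometry of `Y` (distance-preserving bijection between two subsets of `Y`)
extends to a distance-preserving bijection of `Z` onto itself. -/
def HSVProperty (X : Type*) [MetricSpace X] : Prop :=
  ∀ Y : Set X, Y.Finite →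
    ∃ (Z : Set X) (_ : Z.Finite) (hYZ : Y ⊆ Z),
      ∀ (A B : Set X) (hAY : A ⊆ Y), B ⊆ Y →
        ∀ p : X → X, Set.BijOn p A B →
          (∀ a ∈ A, ∀ b ∈ A, dist (p a) (p b) = dist a b) →
          ∃ j : Z ≃ᵢ Z, ∀ a, ∀ ha : a ∈ A, (j ⟨a, hYZ (hAY ha)⟩ : X) = p a

open RealInnerProductSpace Polynomial

noncomputable def chebQ : ℕ → ℤ[X]
  | 0 => 0
  | 1 => 1
  | (k+2) => X * chebQ (k+1) - chebQ k

lemma chebQ_monic : ∀ k : ℕ, (chebQ (k+1)).Monic ∧ (chebQ (k+1)).natDegree = k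
  | 0 => by simp [chebQ, monic_one]
  | 1 => by
      have : chebQ 2 = X := by simp [chebQ]
      simp [this, monic_X]
  | (k+2) => by
      obtain ⟨h1m, h1d⟩ := chebQ_monic k
      obtain ⟨h2m, h2d⟩ := chebQ_monic (k+1)
      have hXm : (X * chebQ (k+2)).Monic := (monic_X).mul h2m
      have hXd : (X * chebQ (k+2)).natDegree = k + 2 := by
        rw [natDegree_mul X_ne_zero h2m.ne_zero, natDegree_X, h2d]; omega
      have hlt : (chebQ (k+1)).degree < (X * chebQ (k+2)).degree := by
        rw [degree_eq_natDegree h1m.ne_zero, degree_eq_natDegree hXm.ne_zero, hXd, h1d]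
        exact_mod_cast by omega
      have : chebQ (k+3) = X * chebQ (k+2) + (-(chebQ (k+1))) := by
        simp [chebQ]; ring
      constructor
      · rw [this]
        exact hXm.add_of_left (by rwa [degree_neg])
      · rw [this, natDegree_add_eq_left_of_degree_lt (by rwa [degree_neg]), hXd]

lemma chebQ_ne_zero {n : ℕ} (hn : 1 ≤ n) : chebQ n ≠ 0 := by
  obtain ⟨k, rfl⟩ := Nat.exists_eq_add_of_le' hn
  exact (chebQ_monic k).1.ne_zero

section Geom
variable {H : Type*} [NormedAddCommGroup H] [InnerProductSpace ℝ H]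

lemma dist_unit_eq {u v : H} (hu : ‖u‖ = 1) (hv : ‖v‖ = 1) :
    dist u v = Real.sqrt (2 - 2 * ⟪u, v⟫) := by
  rw [dist_eq_norm, ← Real.sqrt_sq (norm_nonneg (u - v)), norm_sub_sq_real, hu, hv]
  ring_nf

lemma inner_eq_of_dist_eq {u v u' v' : H} (hu : ‖u‖ = 1) (hv : ‖v‖ = 1)
    (hu' : ‖u'‖ = 1) (hv' : ‖v'‖ = 1) (h : dist u v = dist u' v') :
    ⟪u, v⟫ = ⟪u', v'⟫ := by
  have h2 : ‖u - v‖ ^ 2 = ‖u' - v'‖ ^ 2 := by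
    rw [← dist_eq_norm, ← dist_eq_norm, h]
  rw [norm_sub_sq_real, norm_sub_sq_real, hu, hv, hu', hv'] at h2
  linarith

lemma rigid {u v w : H} (hu : ‖u‖ = 1) (hv : ‖v‖ = 1) (hw : ‖w‖ = 1) {c : ℝ}
    (h1 : ⟪u, v⟫ = c) (h2 : ⟪v, w⟫ = c) (h3 : ⟪u, w⟫ = 2 * c ^ 2 - 1) :
    w = (2 * c) • v - u := by
  have hd : ⟪w - ((2 * c) • v - u), w - ((2 * c) • v - u)⟫ = 0 := by
    have huu : ⟪u, u⟫ = 1 := by rw [real_inner_self_eq_norm_sq, hu]; norm_num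
    have hvv : ⟪v, v⟫ = 1 := by rw [real_inner_self_eq_norm_sq, hv]; norm_num
    have hww : ⟪w, w⟫ = 1 := by rw [real_inner_self_eq_norm_sq, hw]; norm_num
    have hvu : ⟪v, u⟫ = c := by rw [real_inner_comm]; exact h1
    have hwv : ⟪w, v⟫ = c := by rw [real_inner_comm]; exact h2
    have hwu : ⟪w, u⟫ = 2 * c ^ 2 - 1 := by rw [real_inner_comm]; exact h3
    simp only [inner_sub_left, inner_sub_right, inner_smul_left, inner_smul_right,
      RCLike.conj_to_real, conj_trivial, huu, hvv, hww, h1, h2, h3, hvu, hwv, hwu]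
    ring
  exact sub_eq_zero.mp (inner_self_eq_zero.mp hd)
end Geom



/-- The unit sphere of a real inner product space of dimension at least `2`, with the
chordal metric induced from the ambient space, does not have the
Hrushovski–Solecki–Vershik property. -/
theorem unit_sphere_not_hsv {H : Type*} [NormedAddCommGroup H] [InnerProductSpace ℝ H]
    (hdim : 2 ≤ Module.rank ℝ H) :
    ¬ HSVProperty (Metric.sphere (0 : H) 1) := by
  classical
  intro hsv
  -- the transcendental parameter
  set t : ℝ := liouvilleNumber 3 with ht_def
  have h3 : (1:ℝ) < 3 := by norm_num
  have htrans : Transcendental ℤ t := by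
    have := transcendental_liouvilleNumber (m := 3) (by norm_num)
    simpa using this
  have ht_pos : 0 < t := by
    have h1 := LiouvilleNumber.partialSum_add_remainder h3 0
    have h2 := LiouvilleNumber.remainder_pos h3 0
    have h4 : LiouvilleNumber.partialSum (3:ℝ) 0 = 1/3 := by
      simp [LiouvilleNumber.partialSum]
    rw [ht_def, ← h1, h4]; linarith
  have ht_lt : t < 1 := by
    have h1 := LiouvilleNumber.partialSum_add_remainder h3 0
    have h2 := LiouvilleNumber.remainder_lt' 0 h3
    have h4 : LiouvilleNumber.partialSum (3:ℝ) 0 = 1/3 := by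
      simp [LiouvilleNumber.partialSum]
    have h5 : ((1:ℝ) - 1/3)⁻¹ * (1 / 3 ^ (0+1).factorial) = 1/2 := by
      norm_num [Nat.factorial]
    rw [ht_def, ← h1, h4]; rw [h5] at h2; linarith
  set c : ℝ := t / 2 with hc_def
  have hc_pos : 0 < c := by positivity
  have hc_lt : c < 1/2 := by rw [hc_def]; linarith
  -- orthonormal pair
  have hnt : Nontrivial H := by
    rw [← rank_pos_iff_nontrivial (R := ℝ)]
    exact lt_of_lt_of_le (by norm_num) hdim
  obtain ⟨x, hx⟩ := exists_ne (0 : H)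
  obtain ⟨y, hxy⟩ := exists_linearIndependent_pair_of_one_lt_rank
    (lt_of_lt_of_le (by norm_num) hdim) hx
  haveI : WellFoundedLT (Fin 2) := inferInstance
  have hon : Orthonormal ℝ (InnerProductSpace.gramSchmidtNormed ℝ ![x, y]) :=
    InnerProductSpace.gramSchmidtNormed_orthonormal (ι := Fin 2) hxy
  set e₁ : H := InnerProductSpace.gramSchmidtNormed ℝ ![x, y] 0 with he₁_def
  set e₂ : H := InnerProductSpace.gramSchmidtNormed ℝ ![x, y] 1 with he₂_def
  have he₁ : ‖e₁‖ = 1 := hon.1 0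
  have he₂ : ‖e₂‖ = 1 := hon.1 1
  have he₁₂ : ⟪e₁, e₂⟫ = 0 := hon.2 (by decide)
  have he₂₁ : ⟪e₂, e₁⟫ = 0 := hon.2 (by decide)
  have hee₁ : ⟪e₁, e₁⟫ = 1 := by rw [real_inner_self_eq_norm_sq, he₁]; norm_num
  have hee₂ : ⟪e₂, e₂⟫ = 1 := by rw [real_inner_self_eq_norm_sq, he₂]; norm_num
  -- the three points
  set s : ℝ := Real.sqrt (1 - c^2) with hs_def
  have hc2 : c^2 < 1 := by nlinarith
  have hs_pos : 0 < s := Real.sqrt_pos.mpr (by nlinarith)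
  have hs2 : s^2 = 1 - c^2 := Real.sq_sqrt (by nlinarith)
  set x0 : H := e₁ with hx0_def
  set x1 : H := c • e₁ + s • e₂ with hx1_def
  set x2 : H := t • x1 - x0 with hx2_def
  have inner01 : ⟪x0, x1⟫ = c := by
    simp [hx0_def, hx1_def, inner_add_right, inner_smul_right, hee₁, he₁₂]
    rw [← hx0_def, he₁₂, he₁]; ring
  have inner10 : ⟪x1, x0⟫ = c := by rw [real_inner_comm]; exact inner01
  have inner11 : ⟪x1, x1⟫ = 1 := by
    rw [hx1_def, ← hx0_def]
    simp only [inner_add_left, inner_add_right, inner_smul_left, inner_smul_right,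
      conj_trivial, hee₁, hee₂, he₁₂, he₂₁]
    nlinarith
  have hx0n : ‖x0‖ = 1 := he₁
  have hx1n : ‖x1‖ = 1 := by
    rw [← Real.sqrt_sq (norm_nonneg x1), ← real_inner_self_eq_norm_sq, inner11, Real.sqrt_one]
  have inner02 : ⟪x0, x2⟫ = 2 * c^2 - 1 := by
    rw [hx2_def, inner_sub_right, inner_smul_right, inner01, real_inner_self_eq_norm_sq, hx0n]
    rw [hc_def]; ring
  have inner12 : ⟪x1, x2⟫ = c := by
    rw [hx2_def, inner_sub_right, inner_smul_right, inner11, inner10, hc_def]; ring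
  have hx2n : ‖x2‖ = 1 := by
    have h : ⟪x2, x2⟫ = 1 := by
      simp only [hx2_def, inner_sub_left, inner_sub_right, inner_smul_left,
        inner_smul_right, conj_trivial, inner11, inner10, inner01]
      rw [real_inner_self_eq_norm_sq, hx0n, hc_def]; ring
    rw [← Real.sqrt_sq (norm_nonneg x2), ← real_inner_self_eq_norm_sq, h, Real.sqrt_one]
  have inner2e : ⟪e₂, x0⟫ = 0 := he₂₁
  have inner2x1 : ⟪e₂, x1⟫ = s := by
    simp [hx1_def, inner_add_right, inner_smul_right, hee₂, he₂₁]
    rw [← hx0_def, he₂₁, he₂]; ring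
  -- points of the sphere
  set X := Metric.sphere (0 : H) 1 with hX_def
  set x0' : X := ⟨x0, by rw [hX_def]; exact mem_sphere_zero_iff_norm.mpr hx0n⟩ with hx0'_def
  set x1' : X := ⟨x1, by rw [hX_def]; exact mem_sphere_zero_iff_norm.mpr hx1n⟩ with hx1'_def
  set x2' : X := ⟨x2, by rw [hX_def]; exact mem_sphere_zero_iff_norm.mpr hx2n⟩ with hx2'_def
  have hne01 : x0' ≠ x1' := by
    intro h
    have : x0 = x1 := congrArg Subtype.val h
    rw [this] at inner01
    rw [inner11] at inner01
    linarith
  have hne12 : x1' ≠ x2' := by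
    intro h
    have hh : x1 = x2 := congrArg Subtype.val h
    rw [hh, real_inner_self_eq_norm_sq, hx2n] at inner12
    norm_num at inner12
    linarith
  -- the finite set Y and the partial isometry p
  set Y : Set X := {x0', x1', x2'} with hY_def
  have hYfin : Y.Finite := (Set.finite_singleton x2').insert x1' |>.insert x0'
  obtain ⟨Z, hZfin, hYZ, hext⟩ := hsv Y hYfin
  set A : Set X := {x0', x1'} with hA_def
  set B : Set X := {x1', x2'} with hB_def
  have hAY : A ⊆ Y := by
    intro z hz
    simp only [hA_def, hY_def, Set.mem_insert_iff, Set.mem_singleton_iff] at hz ⊢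
    tauto
  have hBY : B ⊆ Y := by
    intro z hz
    simp only [hB_def, hY_def, Set.mem_insert_iff, Set.mem_singleton_iff] at hz ⊢
    tauto
  set p : X → X := fun z => if z = x0' then x1' else if z = x1' then x2' else z with hp_def
  have hp0 : p x0' = x1' := by simp [hp_def]
  have hp1 : p x1' = x2' := by simp [hp_def, hne01.symm]
  have hbij : Set.BijOn p A B := by
    refine ⟨?_, ?_, ?_⟩
    · intro z hz
      rcases hz with h | h
      · rw [h, hp0]; exact Set.mem_insert _ _
      · rw [Set.mem_singleton_iff.mp h, hp1]; exact Set.mem_insert_of_mem _ rfl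
    · intro a ha b hb hab
      simp only [hA_def, Set.mem_insert_iff, Set.mem_singleton_iff] at ha hb
      rcases ha with rfl | rfl <;> rcases hb with rfl | rfl
      · rfl
      · rw [hp0, hp1] at hab; exact absurd hab hne12
      · rw [hp0, hp1] at hab; exact absurd hab.symm hne12
      · rfl
    · intro z hz
      rcases hz with h | h
      · exact ⟨x0', Set.mem_insert _ _, by rw [hp0, h]⟩
      · exact ⟨x1', Set.mem_insert_of_mem _ rfl, by rw [hp1, Set.mem_singleton_iff.mp h]⟩
  have hdist12 : dist x1' x2' = dist x0' x1' := by
    rw [Subtype.dist_eq, Subtype.dist_eq]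
    show dist x1 x2 = dist x0 x1
    rw [dist_unit_eq hx1n hx2n, dist_unit_eq hx0n hx1n, inner12, inner01]
  have hpres : ∀ a ∈ A, ∀ b ∈ A, dist (p a) (p b) = dist a b := by
    intro a ha b hb
    simp only [hA_def, Set.mem_insert_iff, Set.mem_singleton_iff] at ha hb
    rcases ha with rfl | rfl <;> rcases hb with rfl | rfl
    · simp [dist_self]
    · rw [hp0, hp1]; exact hdist12
    · rw [hp0, hp1, dist_comm x2' x1', dist_comm x1' x0']
      exact hdist12
    · simp [dist_self]
  obtain ⟨j, hj⟩ := hext A B hAY hBY p hbij hpres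
  have memA0 : x0' ∈ A := Set.mem_insert _ _
  have memA1 : x1' ∈ A := Set.mem_insert_of_mem _ rfl
  set z0 : Z := ⟨x0', hYZ (hAY memA0)⟩ with hz0_def
  set zs : ℕ → Z := fun k => (⇑j)^[k] z0 with hzs_def
  have hstep : ∀ k, zs (k+1) = j (zs k) := fun k => Function.iterate_succ_apply' (⇑j) k z0
  have hj0 := hj x0' memA0
  have hj1 := hj x1' memA1
  have zs1eq : zs 1 = ⟨x1', hYZ (hAY memA1)⟩ :=
    Subtype.ext (hj0.trans hp0)
  -- coercion to H
  set cz : Z → H := fun z => ((z : X) : H) with hcz_def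
  have hnz : ∀ z : Z, ‖cz z‖ = 1 := by
    intro z
    exact mem_sphere_zero_iff_norm.mp (z : X).2
  have hdZ : ∀ z w : Z, dist z w = dist (cz z) (cz w) := by
    intro z w; rw [Subtype.dist_eq, Subtype.dist_eq]
  have cz0 : cz (zs 0) = x0 := rfl
  have cz1 : cz (zs 1) = x1 := by rw [zs1eq]
  have cz2 : cz (zs 2) = x2 := by
    have h2 : zs 2 = j ⟨x1', hYZ (hAY memA1)⟩ := by rw [hstep 1, zs1eq]
    rw [h2]
    show ((j ⟨x1', hYZ (hAY memA1)⟩ : X) : H) = x2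
    rw [hj1, hp1]
  have dcons : ∀ k, dist (zs k) (zs (k+1)) = dist (zs 0) (zs 1) := by
    intro k
    induction k with
    | zero => rfl
    | succ n ih =>
      have h : dist (zs (n+1)) (zs (n+2)) = dist (zs n) (zs (n+1)) := by
        rw [hstep (n+1), hstep n]; exact j.dist_eq _ _
      rw [h]; exact ih
  have dtwo : ∀ k, dist (zs k) (zs (k+2)) = dist (zs 0) (zs 2) := by
    intro k
    induction k with
    | zero => rfl
    | succ n ih =>
      have h : dist (zs (n+1)) (zs (n+3)) = dist (zs n) (zs (n+2)) := by
        rw [hstep (n+2), hstep n]; exact j.dist_eq _ _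
      rw [h]; exact ih
  have hinner1 : ∀ k, ⟪cz (zs k), cz (zs (k+1))⟫ = c := by
    intro k
    have hd : dist (cz (zs k)) (cz (zs (k+1))) = dist x0 x1 := by
      rw [← hdZ, ← cz0, ← cz1, ← hdZ]; exact dcons k
    have := inner_eq_of_dist_eq (hnz (zs k)) (hnz (zs (k+1))) hx0n hx1n (by rw [hd])
    rw [this, inner01]
  have hinner2 : ∀ k, ⟪cz (zs k), cz (zs (k+2))⟫ = 2 * c^2 - 1 := by
    intro k
    have hd : dist (cz (zs k)) (cz (zs (k+2))) = dist x0 x2 := by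
      rw [← hdZ, ← cz0, ← cz2, ← hdZ]; exact dtwo k
    have := inner_eq_of_dist_eq (hnz (zs k)) (hnz (zs (k+2))) hx0n hx2n (by rw [hd])
    rw [this, inner02]
  have hrec : ∀ k, cz (zs (k+2)) = (2*c) • cz (zs (k+1)) - cz (zs k) := fun k =>
    rigid (hnz _) (hnz _) (hnz _) (hinner1 k) (hinner1 (k+1)) (hinner2 k)
  have h2c : (2:ℝ) * c = t := by rw [hc_def]; ring
  -- the Chebyshev coefficients
  set f : ℕ → ℝ := fun k => (aeval t) (chebQ k) with hf_def
  have hf0 : f 0 = 0 := by simp [hf_def, chebQ]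
  have hf1 : f 1 = 1 := by simp [hf_def, chebQ]
  have hfrec : ∀ k, f (k+2) = t * f (k+1) - f k := by
    intro k
    have h : chebQ (k+2) = Polynomial.X * chebQ (k+1) - chebQ k := by simp [chebQ]
    simp [hf_def, h, map_sub, map_mul, aeval_X]
  have hf2 : f 2 = t := by rw [hfrec 0, hf0, hf1]; ring
  have main : ∀ k, cz (zs k) = (f (k+1) - t * f k) • x0 + f k • x1 ∧
      cz (zs (k+1)) = (f (k+2) - t * f (k+1)) • x0 + f (k+1) • x1 := by
    intro k
    induction k with
    | zero =>
      constructor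
      · show cz (zs 0) = (f 1 - t * f 0) • x0 + f 0 • x1
        rw [cz0, hf0, hf1]
        module
      · show cz (zs 1) = (f 2 - t * f 1) • x0 + f 1 • x1
        rw [cz1, hf1, hf2]
        module
    | succ n ih =>
      obtain ⟨ih1, ih2⟩ := ih
      refine ⟨ih2, ?_⟩
      show cz (zs (n+2)) = (f (n+3) - t * f (n+2)) • x0 + f (n+2) • x1
      have h3 : f (n+3) = t * f (n+2) - f (n+1) := hfrec (n+1)
      have h2 : f (n+2) = t * f (n+1) - f n := hfrec n
      rw [hrec n, ih1, ih2, h2c, h3, h2]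
      module
  -- periodicity from finiteness
  haveI : Finite Z := hZfin.to_subtype
  obtain ⟨a, b, hab, heq⟩ := Finite.exists_ne_map_eq_of_infinite zs
  have final : ∀ n, 1 ≤ n → zs n = zs 0 → False := by
    intro n hn1 hzn
    have hm := (main n).1
    rw [hzn, cz0] at hm
    have hip := congrArg (fun v => (⟪e₂, v⟫ : ℝ)) hm
    simp only [inner_add_right, inner_smul_right, inner2e, inner2x1, mul_zero, zero_add] at hip
    have hfn : f n = 0 := by
      have : f n * s = 0 := by linarith
      rcases mul_eq_zero.mp this with h | h
      · exact h
      · exact absurd h (ne_of_gt hs_pos)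
    exact htrans ⟨chebQ n, chebQ_ne_zero hn1, hfn⟩
  have key : ∀ a b : ℕ, a < b → zs a = zs b → False := by
    intro a b hlt he
    have hinj : Function.Injective (⇑j) := j.injective
    have h1 : (⇑j)^[a + (b - a)] z0 = (⇑j)^[a] ((⇑j)^[b-a] z0) :=
      Function.iterate_add_apply (⇑j) a (b-a) z0
    have h2 : a + (b - a) = b := by omega
    rw [h2] at h1
    have h3 : (⇑j)^[a] ((⇑j)^[b-a] z0) = (⇑j)^[a] z0 := by
      rw [← h1]; exact he.symm
    have h4 : (⇑j)^[b-a] z0 = z0 := hinj.iterate a h3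
    exact final (b-a) (by omega) h4
  rcases lt_or_gt_of_ne hab with h | h
  · exact key a b h heq
  · exact key b a h heq.symm
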